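/- arXiv:2307.05737 — 2 statements merged into one kernel-verified Lean document; each statement's English description precedes it below -/
import Mathlib

section
/- Let A₁,…,Aₘ ∈ ℝⁿ be distinct points and b₁,…,bₘ > 0. Fix an index i. The point Aᵢ minimizes f(x) = Σⱼ bⱼ ‖x − Aⱼ‖ if and only if ‖ Σ_{j ≠ i} bⱼ (Aⱼ − Aᵢ)/‖Aⱼ − Aᵢ‖ ‖ ≤ bᵢ. -/
local notation "⟪" x ", " y "⟫" => @inner ℝ _ _ x y

private theorem lb_aux {E : Type*} [NormedAddCommGroup E] [InnerProductSpace ℝ E]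
    (v w : E) : ‖v‖^2 - ⟪v, w⟫ ≤ ‖v‖ * ‖v - w‖ := by
  have h1 : ⟪v, v - w⟫ ≤ ‖v‖ * ‖v - w‖ := real_inner_le_norm v (v - w)
  have h2 : ⟪v, v - w⟫ = ‖v‖^2 - ⟪v, w⟫ := by
    rw [inner_sub_right, real_inner_self_eq_norm_sq]
  linarith

private theorem ub_aux {E : Type*} [NormedAddCommGroup E] [InnerProductSpace ℝ E]
    (v w : E) (hv : v ≠ 0) :
    ‖w - v‖ * ‖v‖ ≤ ‖v‖^2 - ⟪v, w⟫ + ‖w‖^2 / 2 := by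
  have hv' : 0 < ‖v‖ := norm_pos_iff.mpr hv
  have heq : ‖w - v‖^2 = ‖w‖^2 - 2 * ⟪v, w⟫ + ‖v‖^2 := by
    rw [norm_sub_sq_real, real_inner_comm]
  have hcs : ⟪v, w⟫ ≤ ‖v‖ * ‖w‖ := real_inner_le_norm v w
  have hn : 0 ≤ ‖w - v‖ := norm_nonneg _
  have hw : 0 ≤ ‖w‖ := norm_nonneg _
  nlinarith [sq_nonneg (⟪v, w⟫ - ‖w‖^2/2), sq_nonneg (‖v‖ - ‖w‖),
    sq_nonneg (‖w - v‖ - ‖v‖),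
    mul_nonneg hn hw, sq_nonneg (‖w - v‖*‖v‖ - (‖v‖^2 - ⟪v, w⟫ + ‖w‖^2/2))]

theorem fermat_absorbed_characterization (m n : ℕ)
    (A : Fin m → EuclideanSpace ℝ (Fin n)) (hA : Function.Injective A)
    (b : Fin m → ℝ) (hb : ∀ i, 0 < b i) (i : Fin m) :
    (∀ y, ∑ j, b j * ‖A i - A j‖ ≤ ∑ j, b j * ‖y - A j‖) ↔
      ‖∑ j ∈ Finset.univ.erase i, b j • (‖A j - A i‖⁻¹ • (A j - A i))‖ ≤ b i := by
  set u : EuclideanSpace ℝ (Fin n) :=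
    ∑ j ∈ Finset.univ.erase i, b j • (‖A j - A i‖⁻¹ • (A j - A i)) with hu_def
  have hvne : ∀ j ∈ Finset.univ.erase i, A j - A i ≠ 0 := by
    intro j hj
    exact sub_ne_zero.mpr (fun he => (Finset.ne_of_mem_erase hj) (hA he))
  have hfAi : ∑ j, b j * ‖A i - A j‖
      = ∑ j ∈ Finset.univ.erase i, b j * ‖A j - A i‖ := by
    rw [← Finset.add_sum_erase _ _ (Finset.mem_univ i)]
    rw [sub_self, norm_zero, mul_zero, zero_add]
    exact Finset.sum_congr rfl (fun j _ => by rw [norm_sub_rev])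
  constructor
  · -- minimality → ‖u‖ ≤ b i
    intro hle
    by_contra hcon
    push_neg at hcon
    have hu0 : 0 < ‖u‖ := lt_trans (hb i) hcon
    set d : EuclideanSpace ℝ (Fin n) := ‖u‖⁻¹ • u with hd_def
    have hdnorm : ‖d‖ = 1 := by
      rw [hd_def, norm_smul, norm_inv, norm_norm, inv_mul_cancel₀ (ne_of_gt hu0)]
    set C : ℝ := ∑ j ∈ Finset.univ.erase i, b j * ‖A j - A i‖⁻¹ / 2 with hC_def
    have hC0 : 0 ≤ C := Finset.sum_nonneg (fun j _ =>
      div_nonneg (mul_nonneg (hb j).le (inv_nonneg.mpr (norm_nonneg _))) (by norm_num))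
    set t : ℝ := (‖u‖ - b i) / (2*C + 1) with ht_def
    have ht0 : 0 < t := div_pos (by linarith) (by linarith)
    have htt : ‖u‖ - b i = t * (2*C + 1) := by
      rw [ht_def]; field_simp
    set y : EuclideanSpace ℝ (Fin n) := A i + t • d with hy_def
    have htd : ‖t • d‖ = t := by
      rw [norm_smul, hdnorm, Real.norm_eq_abs, abs_of_pos ht0, mul_one]
    have hud : ⟪u, d⟫ = ‖u‖ := by
      rw [hd_def, real_inner_smul_right, real_inner_self_eq_norm_sq]
      field_simp
    have key : ∀ j ∈ Finset.univ.erase i,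
        b j * ‖y - A j‖ ≤ b j * ‖A j - A i‖
          - t * ⟪b j • (‖A j - A i‖⁻¹ • (A j - A i)), d⟫
          + t^2 * (b j * ‖A j - A i‖⁻¹ / 2) := by
      intro j hj
      have hv := hvne j hj
      have hr : 0 < ‖A j - A i‖ := norm_pos_iff.mpr hv
      have h1 := ub_aux (A j - A i) (t • d) hv
      have h2 : t • d - (A j - A i) = y - A j := by rw [hy_def]; abel
      have h4 : ⟪A j - A i, t • d⟫ = t * ⟪A j - A i, d⟫ :=
        real_inner_smul_right _ _ _
      rw [h2, htd, h4] at h1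
      have hip : ⟪b j • (‖A j - A i‖⁻¹ • (A j - A i)), d⟫
          = b j * (‖A j - A i‖⁻¹ * ⟪A j - A i, d⟫) := by
        rw [real_inner_smul_left, real_inner_smul_left]
      rw [hip]
      have hmul := mul_le_mul_of_nonneg_left h1
        (le_of_lt (mul_pos (hb j) (inv_pos.mpr hr)))
      have e1 : b j * ‖A j - A i‖⁻¹ * (‖y - A j‖ * ‖A j - A i‖)
          = b j * ‖y - A j‖ := by
        field_simp
      have e2 : b j * ‖A j - A i‖⁻¹
            * (‖A j - A i‖^2 - t * ⟪A j - A i, d⟫ + t^2/2)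
          = b j * ‖A j - A i‖ - t * (b j * (‖A j - A i‖⁻¹ * ⟪A j - A i, d⟫))
            + t^2 * (b j * ‖A j - A i‖⁻¹ / 2) := by
        field_simp
      rw [e1, e2] at hmul
      exact hmul
    have hsum := Finset.sum_le_sum key
    have hinner : ∑ j ∈ Finset.univ.erase i,
        ⟪b j • (‖A j - A i‖⁻¹ • (A j - A i)), d⟫ = ⟪u, d⟫ := by
      rw [hu_def]; exact (sum_inner _ _ _).symm
    have hrhs : ∑ j ∈ Finset.univ.erase i, (b j * ‖A j - A i‖
          - t * ⟪b j • (‖A j - A i‖⁻¹ • (A j - A i)), d⟫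
          + t^2 * (b j * ‖A j - A i‖⁻¹ / 2))
        = (∑ j ∈ Finset.univ.erase i, b j * ‖A j - A i‖) - t * ‖u‖ + t^2 * C := by
      rw [Finset.sum_add_distrib, Finset.sum_sub_distrib, ← Finset.mul_sum,
        ← Finset.mul_sum, hinner, hud, hC_def]
    rw [hrhs] at hsum
    have hfy : ∑ j, b j * ‖y - A j‖
        = b i * t + ∑ j ∈ Finset.univ.erase i, b j * ‖y - A j‖ := by
      rw [← Finset.add_sum_erase _ _ (Finset.mem_univ i)]
      congr 1
      rw [hy_def]
      congr 1
      rw [add_sub_cancel_left, htd]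
    have hcontra := hle y
    rw [hfAi, hfy] at hcontra
    have ht2 : 0 < t^2 * (C + 1) := by positivity
    nlinarith [hcontra, hsum, htt]
  · -- ‖u‖ ≤ b i → minimality
    intro h y
    have key : ∀ j ∈ Finset.univ.erase i,
        b j * ‖A j - A i‖ - ⟪b j • (‖A j - A i‖⁻¹ • (A j - A i)), y - A i⟫
          ≤ b j * ‖y - A j‖ := by
      intro j hj
      have hv := hvne j hj
      have hr : 0 < ‖A j - A i‖ := norm_pos_iff.mpr hv
      have h1 := lb_aux (A j - A i) (y - A i)
      have h2 : (A j - A i) - (y - A i) = A j - y := by abel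
      rw [h2, norm_sub_rev (A j) y] at h1
      have hip : ⟪b j • (‖A j - A i‖⁻¹ • (A j - A i)), y - A i⟫
          = b j * (‖A j - A i‖⁻¹ * ⟪A j - A i, y - A i⟫) := by
        rw [real_inner_smul_left, real_inner_smul_left]
      rw [hip]
      have hmul := mul_le_mul_of_nonneg_left h1
        (le_of_lt (mul_pos (hb j) (inv_pos.mpr hr)))
      have e1 : b j * ‖A j - A i‖⁻¹ * (‖A j - A i‖ * ‖y - A j‖)
          = b j * ‖y - A j‖ := by
        field_simp
      have e2 : b j * ‖A j - A i‖⁻¹ * (‖A j - A i‖^2 - ⟪A j - A i, y - A i⟫)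
          = b j * ‖A j - A i‖ - b j * (‖A j - A i‖⁻¹ * ⟪A j - A i, y - A i⟫) := by
        field_simp
      rw [e1, e2] at hmul
      exact hmul
    have hsum := Finset.sum_le_sum key
    rw [Finset.sum_sub_distrib] at hsum
    have hinner : ∑ j ∈ Finset.univ.erase i,
        ⟪b j • (‖A j - A i‖⁻¹ • (A j - A i)), y - A i⟫ = ⟪u, y - A i⟫ := by
      rw [hu_def]; exact (sum_inner _ _ _).symm
    rw [hinner] at hsum
    have hcs : ⟪u, y - A i⟫ ≤ b i * ‖y - A i‖ :=
      le_trans (real_inner_le_norm u (y - A i))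
        (mul_le_mul_of_nonneg_right h (norm_nonneg _))
    have hrhs : ∑ j, b j * ‖y - A j‖
        = b i * ‖y - A i‖ + ∑ j ∈ Finset.univ.erase i, b j * ‖y - A j‖ := by
      rw [← Finset.add_sum_erase _ _ (Finset.mem_univ i)]
    rw [hfAi, hrhs]
    linarith
end

section
/- Let A₁,…,Aₘ ∈ ℝⁿ be distinct points and b₁,…,bₘ > 0. If for every index i we have ‖ Σ_{j ≠ i} bⱼ (Aⱼ − Aᵢ)/‖Aⱼ − Aᵢ‖ ‖ > bᵢ, then the minimizer A₀ of f(x) = Σⱼ bⱼ ‖x − Aⱼ‖ satisfies A₀ ∉ {A₁,…,Aₘ}. -/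
open Finset

lemma norm_sub_le_aux {E : Type*} [NormedAddCommGroup E] [InnerProductSpace ℝ E]
    (d w : E) (hd : d ≠ 0) :
    ‖d - w‖ ≤ ‖d‖ - (inner ℝ d w : ℝ) / ‖d‖ + ‖w‖ ^ 2 / (2 * ‖d‖) := by
  have ha : (0:ℝ) < ‖d‖ := norm_pos_iff.mpr hd
  have hsq : ‖d - w‖ ^ 2 = ‖d‖ ^ 2 - 2 * (inner ℝ d w : ℝ) + ‖w‖ ^ 2 := norm_sub_sq_real d w
  have h1 : ‖d - w‖ ≤ (2 * ‖d‖ ^ 2 - 2 * (inner ℝ d w : ℝ) + ‖w‖ ^ 2) / (2 * ‖d‖) := by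
    rw [le_div_iff₀ (by positivity)]
    nlinarith [sq_nonneg (‖d‖ - ‖d - w‖), norm_nonneg (d - w)]
  calc ‖d - w‖ ≤ (2 * ‖d‖ ^ 2 - 2 * (inner ℝ d w : ℝ) + ‖w‖ ^ 2) / (2 * ‖d‖) := h1
    _ = ‖d‖ - (inner ℝ d w : ℝ) / ‖d‖ + ‖w‖ ^ 2 / (2 * ‖d‖) := by
        field_simp

theorem fermat_floating_case (m n : ℕ)
    (A : Fin m → EuclideanSpace ℝ (Fin n)) (hA : Function.Injective A)
    (b : Fin m → ℝ) (hb : ∀ i, 0 < b i)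
    (h : ∀ i, b i < ‖∑ j ∈ Finset.univ.erase i, b j • (‖A j - A i‖⁻¹ • (A j - A i))‖)
    (A₀ : EuclideanSpace ℝ (Fin n))
    (hmin : ∀ y, ∑ j, b j * ‖A₀ - A j‖ ≤ ∑ j, b j * ‖y - A j‖) :
    ∀ i, A₀ ≠ A i := by
  intro i h0
  set u : EuclideanSpace ℝ (Fin n) :=
    ∑ j ∈ Finset.univ.erase i, b j • (‖A j - A i‖⁻¹ • (A j - A i)) with hu_def
  have hu : b i < ‖u‖ := h i
  have hupos : 0 < ‖u‖ := (hb i).trans hu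
  have hdist : ∀ j ∈ Finset.univ.erase i, (0:ℝ) < ‖A j - A i‖ := by
    intro j hj
    rw [Finset.mem_erase] at hj
    exact norm_pos_iff.mpr (sub_ne_zero.mpr fun e => hj.1 (hA e))
  -- inner product identity
  have hinner : ∑ j ∈ Finset.univ.erase i, b j * ((inner ℝ (A j - A i) u : ℝ) / ‖A j - A i‖) = ‖u‖ ^ 2 := by
    rw [← real_inner_self_eq_norm_sq]
    conv_rhs => rw [hu_def, sum_inner]
    refine Finset.sum_congr rfl fun j hj => ?_
    rw [real_inner_smul_left, real_inner_smul_left, div_eq_inv_mul]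
  set C : ℝ := ∑ j ∈ Finset.univ.erase i, b j * (‖u‖ ^ 2 / (2 * ‖A j - A i‖)) with hC_def
  have hC : 0 ≤ C := by
    apply Finset.sum_nonneg
    intro j hj
    exact mul_nonneg (hb j).le (by positivity)
  set t : ℝ := ‖u‖ * (‖u‖ - b i) / (C + 1) with ht_def
  have ht : 0 < t := div_pos (mul_pos hupos (by linarith)) (by linarith)
  have htC : t * (C + 1) = ‖u‖ * (‖u‖ - b i) := by
    rw [ht_def]; field_simp
  -- per-term estimate
  have step : ∀ j ∈ Finset.univ.erase i,
      b j * ‖(A i + t • u) - A j‖ ≤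
        b j * ‖A i - A j‖ - t * (b j * ((inner ℝ (A j - A i) u : ℝ) / ‖A j - A i‖))
          + t ^ 2 * (b j * (‖u‖ ^ 2 / (2 * ‖A j - A i‖))) := by
    intro j hj
    have hd := hdist j hj
    have hne : A j - A i ≠ 0 := norm_pos_iff.mp hd
    have hrw : ‖(A i + t • u) - A j‖ = ‖(A j - A i) - t • u‖ := by
      rw [← norm_neg]; congr 1; abel
    have key : ‖(A j - A i) - t • u‖ ≤
        ‖A j - A i‖ - t * (inner ℝ (A j - A i) u : ℝ) / ‖A j - A i‖
          + t ^ 2 * ‖u‖ ^ 2 / (2 * ‖A j - A i‖) := by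
      have := norm_sub_le_aux (A j - A i) (t • u) hne
      rwa [real_inner_smul_right, norm_smul, Real.norm_eq_abs, abs_of_pos ht, mul_pow] at this
    have h2 := mul_le_mul_of_nonneg_left key (hb j).le
    calc b j * ‖(A i + t • u) - A j‖ = b j * ‖(A j - A i) - t • u‖ := by rw [hrw]
      _ ≤ b j * (‖A j - A i‖ - t * (inner ℝ (A j - A i) u : ℝ) / ‖A j - A i‖
            + t ^ 2 * ‖u‖ ^ 2 / (2 * ‖A j - A i‖)) := h2
      _ = b j * ‖A i - A j‖ - t * (b j * ((inner ℝ (A j - A i) u : ℝ) / ‖A j - A i‖))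
            + t ^ 2 * (b j * (‖u‖ ^ 2 / (2 * ‖A j - A i‖))) := by
          rw [norm_sub_rev (A i)]; ring
  have hsum : ∑ j ∈ Finset.univ.erase i, b j * ‖(A i + t • u) - A j‖ ≤
      (∑ j ∈ Finset.univ.erase i, b j * ‖A i - A j‖) - t * ‖u‖ ^ 2 + t ^ 2 * C := by
    calc ∑ j ∈ Finset.univ.erase i, b j * ‖(A i + t • u) - A j‖
        ≤ ∑ j ∈ Finset.univ.erase i,
            (b j * ‖A i - A j‖ - t * (b j * ((inner ℝ (A j - A i) u : ℝ) / ‖A j - A i‖))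
              + t ^ 2 * (b j * (‖u‖ ^ 2 / (2 * ‖A j - A i‖)))) := Finset.sum_le_sum step
      _ = (∑ j ∈ Finset.univ.erase i, b j * ‖A i - A j‖)
            - t * (∑ j ∈ Finset.univ.erase i, b j * ((inner ℝ (A j - A i) u : ℝ) / ‖A j - A i‖))
            + t ^ 2 * (∑ j ∈ Finset.univ.erase i, b j * (‖u‖ ^ 2 / (2 * ‖A j - A i‖))) := by
          rw [Finset.sum_add_distrib, Finset.sum_sub_distrib, ← Finset.mul_sum, ← Finset.mul_sum]
      _ = (∑ j ∈ Finset.univ.erase i, b j * ‖A i - A j‖) - t * ‖u‖ ^ 2 + t ^ 2 * C := by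
          rw [hinner, hC_def]
  have hL : ∑ j, b j * ‖A₀ - A j‖ = ∑ j ∈ Finset.univ.erase i, b j * ‖A i - A j‖ := by
    rw [h0, ← Finset.add_sum_erase _ _ (Finset.mem_univ i)]
    simp
  have hR : ∑ j, b j * ‖(A i + t • u) - A j‖ =
      b i * (t * ‖u‖) + ∑ j ∈ Finset.univ.erase i, b j * ‖(A i + t • u) - A j‖ := by
    rw [← Finset.add_sum_erase _ (fun j => b j * ‖(A i + t • u) - A j‖) (Finset.mem_univ i)]
    congr 2
    simp [norm_smul, abs_of_pos ht]
  have hmy := hmin (A i + t • u)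
  rw [hL, hR] at hmy
  have key2 : 0 ≤ b i * (t * ‖u‖) - t * ‖u‖ ^ 2 + t ^ 2 * C := by linarith
  nlinarith [mul_pos ht ht, ht, hC, htC]
end
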